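/- Key intermediate inequality for centrality: with σ, δ ∈ [0,1), μ′ = (1−δ)μ, and σ′ defined as in the Newton update (σ′² = ∑ᵢ(hᵢfᵢ/μ′)² with hᵀf = 0, hᵢsᵢ + fᵢxᵢ = μ′ − xᵢsᵢ, x, s > 0, σ² = ∑ᵢ(xᵢsᵢ/μ − 1)² < 1), one has σ′ ≤ (√n·δ + σ)² / (2(1−σ)(1−δ)). -/

import Mathlib

theorem centrality_key_inequality {n : ℕ} (x s h f : Fin n → ℝ) (μ δ σ σ' : ℝ)
    (hx : ∀ i, 0 < x i) (hs : ∀ i, 0 < s i) (hμ : 0 < μ)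
    (hδ0 : 0 ≤ δ) (hδ1 : δ < 1)
    (hσ0 : 0 ≤ σ) (hσ : σ ^ 2 = ∑ i, (x i * s i / μ - 1) ^ 2) (hσ1 : σ < 1)
    (hstep : ∀ i, h i * s i + f i * x i = (1 - δ) * μ - x i * s i)
    (horth : ∑ i, h i * f i = 0)
    (hσ'0 : 0 ≤ σ') (hσ' : σ' ^ 2 = ∑ i, (h i * f i / ((1 - δ) * μ)) ^ 2) :
    σ' ≤ (Real.sqrt n * δ + σ) ^ 2 / (2 * (1 - σ) * (1 - δ)) := by
  have h1δ : (0:ℝ) < 1 - δ := by linarith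
  have h1σ : (0:ℝ) < 1 - σ := by linarith
  have hμ' : 0 < (1 - δ) * μ := mul_pos h1δ hμ
  -- xᵢsᵢ ≥ (1-σ)μ
  have hxs : ∀ i, (1 - σ) * μ ≤ x i * s i := by
    intro i
    have hi : (x i * s i / μ - 1) ^ 2 ≤ σ ^ 2 := by
      rw [hσ]
      exact Finset.single_le_sum (f := fun j => (x j * s j / μ - 1) ^ 2)
        (fun j _ => sq_nonneg _) (Finset.mem_univ i)
    have habs : |x i * s i / μ - 1| ≤ σ := by
      rw [← Real.sqrt_sq hσ0, ← Real.sqrt_sq_eq_abs]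
      exact Real.sqrt_le_sqrt hi
    have := (abs_le.mp habs).1
    rw [← le_div_iff₀ hμ]
    linarith
  obtain ⟨c, hc⟩ : ∃ c : Fin n → ℝ, c = fun i => (1 - δ) * μ - x i * s i := ⟨_, rfl⟩
  have hci : ∀ i, c i = (1 - δ) * μ - x i * s i := fun i => by rw [hc]
  -- per-i product bound
  have key : ∀ i, h i * f i ≤ c i ^ 2 / (4 * ((1 - σ) * μ)) := by
    intro i
    have hxsi : 0 < x i * s i := mul_pos (hx i) (hs i)
    have h4 : h i * f i * (x i * s i) ≤ c i ^ 2 / 4 := by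
      have h6 := hstep i
      rw [hci i]
      nlinarith [sq_nonneg (h i * s i - f i * x i)]
    have h5 : h i * f i ≤ c i ^ 2 / (4 * (x i * s i)) := by
      rw [le_div_iff₀ (by positivity)]
      nlinarith [h4]
    refine h5.trans ?_
    apply div_le_div_of_nonneg_left (sq_nonneg _) (by positivity)
    have := hxs i
    linarith
  obtain ⟨T, hT⟩ : ∃ T : ℝ, T = ∑ i, |h i * f i| := ⟨_, rfl⟩
  have hTnn : 0 ≤ T := hT ▸ Finset.sum_nonneg fun i _ => abs_nonneg _
  -- T ≤ (∑ c i^2) / (2(1-σ)μ)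
  have habs2 : ∀ a : ℝ, |a| = 2 * max a 0 - a := by
    intro a
    rcases le_total a 0 with ha | ha
    · rw [abs_of_nonpos ha, max_eq_right ha]; ring
    · rw [abs_of_nonneg ha, max_eq_left ha]; ring
  have hTbound : T ≤ (∑ i, c i ^ 2) / (2 * ((1 - σ) * μ)) := by
    have h1 : T = 2 * ∑ i, max (h i * f i) 0 := by
      rw [hT]
      rw [Finset.sum_congr rfl (fun i _ => habs2 (h i * f i))]
      rw [Finset.sum_sub_distrib, horth, ← Finset.mul_sum]
      ring
    have h2 : ∑ i, max (h i * f i) 0 ≤ ∑ i, c i ^ 2 / (4 * ((1 - σ) * μ)) := by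
      apply Finset.sum_le_sum
      intro i _
      exact max_le (key i) (by positivity)
    rw [h1]
    calc 2 * ∑ i, max (h i * f i) 0
        ≤ 2 * ∑ i, c i ^ 2 / (4 * ((1 - σ) * μ)) := by linarith
      _ = (∑ i, c i ^ 2) / (2 * ((1 - σ) * μ)) := by
          rw [← Finset.sum_div]
          field_simp
          ring
  -- σ' ≤ T / μ'
  have hsum2 : ∑ i, (h i * f i) ^ 2 ≤ T ^ 2 := by
    have : ∀ i ∈ Finset.univ, (h i * f i) ^ 2 ≤ |h i * f i| * T := by
      intro i _
      have h1 : |h i * f i| ≤ T := hT ▸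
        Finset.single_le_sum (f := fun j => |h j * f j|)
          (fun j _ => abs_nonneg _) (Finset.mem_univ i)
      have h2 : (h i * f i) ^ 2 = |h i * f i| * |h i * f i| := by
        rw [← abs_mul, abs_mul_self]; ring
      rw [h2]
      exact mul_le_mul_of_nonneg_left h1 (abs_nonneg _)
    calc ∑ i, (h i * f i) ^ 2 ≤ ∑ i, |h i * f i| * T := Finset.sum_le_sum this
      _ = T * T := by rw [← Finset.sum_mul, ← hT]

      _ = T ^ 2 := by ring
  have hσ'T : σ' ≤ T / ((1 - δ) * μ) := by
    have hsq : σ' ^ 2 ≤ (T / ((1 - δ) * μ)) ^ 2 := by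
      rw [hσ', div_pow]
      calc ∑ i, (h i * f i / ((1 - δ) * μ)) ^ 2
          = (∑ i, (h i * f i) ^ 2) / ((1 - δ) * μ) ^ 2 := by
            rw [Finset.sum_div]
            exact Finset.sum_congr rfl fun i _ => by rw [div_pow]
        _ ≤ T ^ 2 / ((1 - δ) * μ) ^ 2 := by
            apply div_le_div_of_nonneg_right hsum2 (by positivity)
    calc σ' = Real.sqrt (σ' ^ 2) := (Real.sqrt_sq hσ'0).symm
      _ ≤ Real.sqrt ((T / ((1 - δ) * μ)) ^ 2) := Real.sqrt_le_sqrt hsq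
      _ = T / ((1 - δ) * μ) := Real.sqrt_sq (by positivity)
  -- ∑ c i ^ 2 ≤ (√n δ + σ)² μ²
  obtain ⟨W, hW⟩ : ∃ W : ℝ, W = ∑ i, (μ - x i * s i) := ⟨_, rfl⟩
  have hV : ∑ i, (μ - x i * s i) ^ 2 = σ ^ 2 * μ ^ 2 := by
    rw [hσ, Finset.sum_mul]
    apply Finset.sum_congr rfl
    intro i _
    field_simp
    ring
  have hCS : W ^ 2 ≤ (n : ℝ) * (σ ^ 2 * μ ^ 2) := by
    rw [← hV, hW]
    have := Finset.sum_mul_sq_le_sq_mul_sq Finset.univ (fun _ : Fin n => (1:ℝ))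
      (fun i => μ - x i * s i)
    simpa using this
  have hWb : -W ≤ Real.sqrt n * σ * μ := by
    have h1 : -W ≤ |W| := neg_le_abs W
    have h2 : |W| = Real.sqrt (W ^ 2) := (Real.sqrt_sq_eq_abs W).symm
    have h3 : Real.sqrt (W ^ 2) ≤ Real.sqrt ((n:ℝ) * (σ ^ 2 * μ ^ 2)) :=
      Real.sqrt_le_sqrt hCS
    have h4 : Real.sqrt ((n:ℝ) * (σ ^ 2 * μ ^ 2)) = Real.sqrt n * σ * μ := by
      rw [show σ ^ 2 * μ ^ 2 = (σ * μ) ^ 2 by ring,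
        Real.sqrt_mul (Nat.cast_nonneg n), Real.sqrt_sq (by positivity)]
      ring
    linarith [h3, h4 ▸ h3]
  have hSexpand : ∑ i, c i ^ 2 = σ ^ 2 * μ ^ 2 - 2 * δ * μ * W + (n : ℝ) * (δ ^ 2 * μ ^ 2) := by
    calc ∑ i, c i ^ 2
        = ∑ i, ((μ - x i * s i) ^ 2 - 2 * δ * μ * (μ - x i * s i) + δ ^ 2 * μ ^ 2) := by
          apply Finset.sum_congr rfl
          intro i _
          rw [hci i]
          ring
      _ = σ ^ 2 * μ ^ 2 - 2 * δ * μ * W + (n : ℝ) * (δ ^ 2 * μ ^ 2) := by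
          rw [Finset.sum_add_distrib, Finset.sum_sub_distrib, hV, ← Finset.mul_sum,
            Finset.sum_const, Finset.card_univ, Fintype.card_fin, nsmul_eq_mul, ← hW]
  have hsqn : Real.sqrt n ^ 2 = (n : ℝ) := Real.sq_sqrt (Nat.cast_nonneg n)
  have hS : ∑ i, c i ^ 2 ≤ (Real.sqrt n * δ + σ) ^ 2 * μ ^ 2 := by
    rw [hSexpand]
    have hexp : (Real.sqrt n * δ + σ) ^ 2 * μ ^ 2
        = Real.sqrt (n:ℝ) ^ 2 * (δ ^ 2 * μ ^ 2) + 2 * Real.sqrt n * δ * σ * μ ^ 2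
          + σ ^ 2 * μ ^ 2 := by ring
    rw [hexp, hsqn]
    have hmul := mul_le_mul_of_nonneg_left hWb (by positivity : (0:ℝ) ≤ 2 * δ * μ)
    nlinarith [hmul]
  -- combine
  have final : T / ((1 - δ) * μ) ≤ (Real.sqrt n * δ + σ) ^ 2 / (2 * (1 - σ) * (1 - δ)) := by
    have h1 : T ≤ ((Real.sqrt n * δ + σ) ^ 2 * μ ^ 2) / (2 * ((1 - σ) * μ)) := by
      refine hTbound.trans ?_
      apply div_le_div_of_nonneg_right hS (by positivity)
    calc T / ((1 - δ) * μ)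
        ≤ (((Real.sqrt n * δ + σ) ^ 2 * μ ^ 2) / (2 * ((1 - σ) * μ))) / ((1 - δ) * μ) := by
          apply div_le_div_of_nonneg_right h1 hμ'.le
      _ = (Real.sqrt n * δ + σ) ^ 2 / (2 * (1 - σ) * (1 - δ)) := by
          field_simp
  exact hσ'T.trans final
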